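/- Local a posteriori error bound for WST-LSPG (Corollary 4.3): retaining the window-residual setup, suppose u ∈ V and u₀ ∈ E satisfy R u u₀ = 0 (the full-order-model trajectory over the window). Then for every approximate trajectory ũ ∈ V with approximate window initial condition ũ₀ ∈ E, ‖ũ - u‖ ≤ (1 / c₁) * ‖R ũ ũ₀‖ + (c₂ / c₁) * ‖ũ₀ - u₀‖. -/

import Mathlib

/-- Local a posteriori error bound for WST-LSPG (Corollary 4.3). -/
theorem local_a_posteriori_error_bound
    (M N : ℕ)
    (A B : EuclideanSpace ℝ (Fin M) →L[ℝ] EuclideanSpace ℝ (Fin M))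
    (Aic Bic : EuclideanSpace ℝ (Fin N) →L[ℝ] EuclideanSpace ℝ (Fin M))
    (Δt : ℝ) (hΔt : 0 < Δt)
    (F : EuclideanSpace ℝ (Fin M) → EuclideanSpace ℝ (Fin M))
    (f₀ : EuclideanSpace ℝ (Fin N) → EuclideanSpace ℝ (Fin N))
    (κ : ℝ) (hκ : 0 ≤ κ)
    (hF : ∀ x y, ‖F x - F y‖ ≤ κ * ‖x - y‖)
    (hf₀ : ∀ x y, ‖f₀ x - f₀ y‖ ≤ κ * ‖x - y‖)
    (σA σB σAic σBic : ℝ)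
    (hσA : 0 < σA) (hA : ∀ x, σA * ‖x‖ ≤ ‖A x‖)
    (hσB : 0 ≤ σB) (hB : ∀ x, ‖B x‖ ≤ σB * ‖x‖)
    (hσAic : 0 ≤ σAic) (hAic : ∀ x, ‖Aic x‖ ≤ σAic * ‖x‖)
    (hσBic : 0 ≤ σBic) (hBic : ∀ x, ‖Bic x‖ ≤ σBic * ‖x‖)
    (R : EuclideanSpace ℝ (Fin M) → EuclideanSpace ℝ (Fin N) → EuclideanSpace ℝ (Fin M))
    (hR : ∀ w w₀, R w w₀ = A w - Δt • B (F w) + Aic w₀ - Δt • Bic (f₀ w₀))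
    (c₁ c₂ : ℝ)
    (hc₁ : c₁ = σA - σB * Δt * κ) (hc₂ : c₂ = σAic + Δt * κ * σBic)
    (hc₁pos : 0 < c₁)
    (u : EuclideanSpace ℝ (Fin M)) (u₀ : EuclideanSpace ℝ (Fin N))
    (hFOM : R u u₀ = 0)
    (uR : EuclideanSpace ℝ (Fin M)) (uR₀ : EuclideanSpace ℝ (Fin N)) :
    ‖uR - u‖ ≤ (1 / c₁) * ‖R uR uR₀‖ + (c₂ / c₁) * ‖uR₀ - u₀‖ := by

  have hFOM' : A u - Δt • B (F u) + Aic u₀ - Δt • Bic (f₀ u₀) = 0 := by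
    rw [← hR]; exact hFOM
  have key : A (uR - u) = R uR uR₀ + Δt • B (F uR - F u) - Aic (uR₀ - u₀)
      + Δt • Bic (f₀ uR₀ - f₀ u₀) := by
    rw [hR, map_sub A, map_sub B, map_sub Bic, map_sub Aic, smul_sub, smul_sub]
    rw [← sub_eq_zero]
    have h : A uR - A u -
        (A uR - Δt • B (F uR) + Aic uR₀ - Δt • Bic (f₀ uR₀) + (Δt • B (F uR) - Δt • B (F u))
          - (Aic uR₀ - Aic u₀) + (Δt • Bic (f₀ uR₀) - Δt • Bic (f₀ u₀)))
        = -(A u - Δt • B (F u) + Aic u₀ - Δt • Bic (f₀ u₀)) := by abel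
    rw [h, hFOM', neg_zero]
  have hAe : ‖A (uR - u)‖ ≤ ‖R uR uR₀‖ + Δt * (σB * (κ * ‖uR - u‖))
      + σAic * ‖uR₀ - u₀‖ + Δt * (σBic * (κ * ‖uR₀ - u₀‖)) := by
    rw [key]
    have h1 : ‖Δt • B (F uR - F u)‖ ≤ Δt * (σB * (κ * ‖uR - u‖)) := by
      rw [norm_smul, Real.norm_eq_abs, abs_of_pos hΔt]
      gcongr
      calc ‖B (F uR - F u)‖ ≤ σB * ‖F uR - F u‖ := hB _
        _ ≤ σB * (κ * ‖uR - u‖) := by exact mul_le_mul_of_nonneg_left (hF _ _) hσB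
    have h2 : ‖Δt • Bic (f₀ uR₀ - f₀ u₀)‖ ≤ Δt * (σBic * (κ * ‖uR₀ - u₀‖)) := by
      rw [norm_smul, Real.norm_eq_abs, abs_of_pos hΔt]
      gcongr
      calc ‖Bic (f₀ uR₀ - f₀ u₀)‖ ≤ σBic * ‖f₀ uR₀ - f₀ u₀‖ := hBic _
        _ ≤ σBic * (κ * ‖uR₀ - u₀‖) := by exact mul_le_mul_of_nonneg_left (hf₀ _ _) hσBic
    calc ‖R uR uR₀ + Δt • B (F uR - F u) - Aic (uR₀ - u₀) + Δt • Bic (f₀ uR₀ - f₀ u₀)‖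
        ≤ ‖R uR uR₀‖ + ‖Δt • B (F uR - F u)‖ + ‖Aic (uR₀ - u₀)‖
          + ‖Δt • Bic (f₀ uR₀ - f₀ u₀)‖ := by
          refine le_trans (norm_add_le _ _) ?_
          gcongr
          refine le_trans (norm_sub_le _ _) ?_
          gcongr
          exact norm_add_le _ _
      _ ≤ _ := by gcongr; exact hAic _
  have main : c₁ * ‖uR - u‖ ≤ ‖R uR uR₀‖ + c₂ * ‖uR₀ - u₀‖ := by
    have := hA (uR - u)
    rw [hc₁, hc₂]
    nlinarith [hAe]
  have heq : (1 / c₁) * ‖R uR uR₀‖ + (c₂ / c₁) * ‖uR₀ - u₀‖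
      = (‖R uR uR₀‖ + c₂ * ‖uR₀ - u₀‖) / c₁ := by ring
  rw [heq, le_div_iff₀ hc₁pos]
  linarith [main]
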